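/- Let C be a ∘-coalgebra and (V, ⟨·,·⟩) a unitary right C-comodule. If W ⊆ V is a subcomodule, then the orthogonal complement W⊥ is also a subcomodule of V. Hence every unitary C-comodule is completely reducible. -/

import Mathlib

set_option linter.unusedSectionVars false
set_option linter.unusedVariables false
set_option maxHeartbeats 1000000


open TensorProduct Coalgebra

variable {C : Type*} [AddCommGroup C] [Module ℂ C] [Coalgebra ℂ C]
variable {V : Type*} [AddCommGroup V] [Module ℂ V]

/-- A right `C`-comodule structure on `V`. -/
structure CoactionOn (C : Type*) [AddCommGroup C] [Module ℂ C] [Coalgebra ℂ C]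
    (V : Type*) [AddCommGroup V] [Module ℂ V] where
  ρ : V →ₗ[ℂ] V ⊗[ℂ] C
  counit_id : ∀ v : V,
    TensorProduct.rid ℂ V (LinearMap.lTensor V (Coalgebra.counit (R := ℂ)) (ρ v)) = v
  coassoc : ∀ v : V, LinearMap.rTensor C ρ (ρ v) =
    (TensorProduct.assoc ℂ V C C).symm
      (LinearMap.lTensor V (Coalgebra.comul (R := ℂ)) (ρ v))

/-- `W` is a subcomodule: `ρ(W) ⊆ W ⊗ C`. -/
def IsSubcomodule (co : CoactionOn C V) (W : Submodule ℂ V) : Prop :=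
  ∀ x ∈ W, co.ρ x ∈ LinearMap.range (LinearMap.rTensor C W.subtype)

/-- `β` is a unitary form: `Σ β(u₀, v) u₁ = Σ β(u, v₀) v₁∘` (in Sweedler notation). -/
def IsUnitaryForm (circ : C → C) (co : CoactionOn C V) (β : V → V → ℂ) : Prop :=
  ∀ (u v : V) (ι₁ : Type) (s₁ : Finset ι₁) (e₁ : ι₁ → V) (c₁ : ι₁ → C),
    co.ρ u = ∑ i ∈ s₁, e₁ i ⊗ₜ[ℂ] c₁ i →
    ∀ (ι₂ : Type) (s₂ : Finset ι₂) (e₂ : ι₂ → V) (c₂ : ι₂ → C),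
      co.ρ v = ∑ j ∈ s₂, e₂ j ⊗ₜ[ℂ] c₂ j →
      ∑ i ∈ s₁, β (e₁ i) v • c₁ i = ∑ j ∈ s₂, β u (e₂ j) • circ (c₂ j)


section Coord

variable {ι : Type*} [DecidableEq ι] (b : Module.Basis ι ℂ C)
variable (M : Type*) [AddCommGroup M] [Module ℂ M]

noncomputable def coordT (n : ι) : M ⊗[ℂ] C →ₗ[ℂ] M :=
  (Finsupp.lapply n) ∘ₗ (TensorProduct.equivFinsuppOfBasisRight b (M := M)).toLinearMap

lemma coordT_tmul (n : ι) (m : M) (c : C) :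
    coordT b M n (m ⊗ₜ[ℂ] c) = b.repr c n • m := by
  simp [coordT, TensorProduct.equivFinsuppOfBasisRight_apply_tmul_apply]

lemma coordT_apply (n : ι) (x : M ⊗[ℂ] C) :
    coordT b M n x = TensorProduct.equivFinsuppOfBasisRight b x n := rfl

lemma coordT_sum_repr (x : M ⊗[ℂ] C) :
    x = ∑ n ∈ (TensorProduct.equivFinsuppOfBasisRight b x).support,
      coordT b M n x ⊗ₜ[ℂ] b n := by
  conv_lhs => rw [← (TensorProduct.equivFinsuppOfBasisRight b (M := M)).symm_apply_apply x]
  rw [TensorProduct.equivFinsuppOfBasisRight_symm_apply, Finsupp.sum]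
  exact Finset.sum_congr rfl fun n _ => by rw [coordT_apply]

lemma coordT_not_mem_support (n : ι) (x : M ⊗[ℂ] C)
    (h : n ∉ (TensorProduct.equivFinsuppOfBasisRight b x).support) :
    coordT b M n x = 0 := by
  rw [coordT_apply]; exact Finsupp.notMem_support_iff.mp h

lemma fin_sum_eq {α : Type*} [AddCommMonoid α] (t : Finset ι) (G : ι → α) :
    ∑ i : Fin t.card, G ((t.equivFin.symm i : _) : ι) = ∑ n ∈ t, G n := by
  rw [← Finset.sum_coe_sort t G]
  exact Equiv.sum_comp t.equivFin.symm (fun j => G (j : ι))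

lemma coordT_rTensor {N : Type*} [AddCommGroup N] [Module ℂ N] (f : N →ₗ[ℂ] M)
    (n : ι) (y : N ⊗[ℂ] C) :
    coordT b M n (LinearMap.rTensor C f y) = f (coordT b N n y) := by
  induction y using TensorProduct.induction_on with
  | zero => simp
  | tmul u c => simp [coordT_tmul, LinearMap.rTensor_tmul]
  | add x y hx hy => simp [map_add, hx, hy]

lemma mem_range_rTensor_iff (W : Submodule ℂ V) (x : V ⊗[ℂ] C) :
    x ∈ LinearMap.range (LinearMap.rTensor C W.subtype) ↔
      ∀ n : ι, coordT b V n x ∈ W := by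
  constructor
  · rintro ⟨y, rfl⟩ n
    rw [coordT_rTensor]
    exact (coordT b W n y).2
  · intro h
    rw [coordT_sum_repr b V x]
    refine Submodule.sum_mem _ fun n _ => ⟨(⟨coordT b V n x, h n⟩ : W) ⊗ₜ[ℂ] b n, ?_⟩
    rw [LinearMap.rTensor_tmul]
    rfl

lemma coordT_assoc_symm (n : ι) (x : V ⊗[ℂ] (C ⊗[ℂ] C)) :
    coordT b (V ⊗[ℂ] C) n ((TensorProduct.assoc ℂ V C C).symm x) =
      LinearMap.lTensor V (coordT b C n) x := by
  induction x using TensorProduct.induction_on with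
  | zero => simp
  | tmul u y =>
    induction y using TensorProduct.induction_on with
    | zero => simp
    | tmul c c' =>
      rw [TensorProduct.assoc_symm_tmul]
      rw [coordT_tmul, LinearMap.lTensor_tmul, coordT_tmul, TensorProduct.tmul_smul]
    | add y₁ y₂ h₁ h₂ =>
      rw [TensorProduct.tmul_add, map_add, map_add, h₁, h₂, map_add]
  | add x y hx hy => simp [map_add, hx, hy]

end Coord

section Part1

variable {ι : Type*} [DecidableEq ι] (b : Module.Basis ι ℂ C)

lemma beta_zero_left {β : V → V → ℂ} (hβsmul₁ : ∀ (a : ℂ) (u v : V), β (a • u) v = a * β u v)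
    (w : V) : β 0 w = 0 := by
  have := hβsmul₁ 0 0 w
  rw [zero_smul] at this
  simpa using this

/-- Part 1 key computation: coordinates of `ρ v` stay orthogonal to `W`. -/
lemma coord_orthogonal
    (circ : C → C) (co : CoactionOn C V) (β : V → V → ℂ)
    (hβsmul₁ : ∀ (a : ℂ) (u v : V), β (a • u) v = a * β u v)
    (hβunit : IsUnitaryForm circ co β)
    (W : Submodule ℂ V) (hW : IsSubcomodule co W)
    (v : V) (hv : ∀ w ∈ W, β v w = 0) :
    ∀ (n : ι), ∀ w ∈ W, β (coordT b V n (co.ρ v)) w = 0 := by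
  intro n w hw
  set t₁ := (TensorProduct.equivFinsuppOfBasisRight b (co.ρ v)).support with ht₁
  set t₂ := (TensorProduct.equivFinsuppOfBasisRight b (co.ρ w)).support with ht₂
  have rep1 : co.ρ v = ∑ i ∈ Finset.univ,
      (fun i : Fin t₁.card => coordT b V ((t₁.equivFin.symm i : _) : ι) (co.ρ v)) i ⊗ₜ[ℂ]
      (fun i : Fin t₁.card => b ((t₁.equivFin.symm i : _) : ι)) i := by
    rw [fin_sum_eq t₁ (fun m => coordT b V m (co.ρ v) ⊗ₜ[ℂ] b m)]
    exact coordT_sum_repr b V (co.ρ v)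
  have rep2 : co.ρ w = ∑ j ∈ Finset.univ,
      (fun j : Fin t₂.card => coordT b V ((t₂.equivFin.symm j : _) : ι) (co.ρ w)) j ⊗ₜ[ℂ]
      (fun j : Fin t₂.card => b ((t₂.equivFin.symm j : _) : ι)) j := by
    rw [fin_sum_eq t₂ (fun m => coordT b V m (co.ρ w) ⊗ₜ[ℂ] b m)]
    exact coordT_sum_repr b V (co.ρ w)
  have key := hβunit v w _ Finset.univ _ _ rep1 _ Finset.univ _ _ rep2
  -- RHS vanishes since the coordinates of ρ w lie in W and v ⟂ W
  have hWc : ∀ m : ι, coordT b V m (co.ρ w) ∈ W :=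
    (mem_range_rTensor_iff b W (co.ρ w)).mp (hW w hw)
  have hrhs : ∑ j : Fin t₂.card,
      β v (coordT b V ((t₂.equivFin.symm j : _) : ι) (co.ρ w)) •
        circ (b ((t₂.equivFin.symm j : _) : ι)) = 0 := by
    refine Finset.sum_eq_zero fun j _ => ?_
    rw [hv _ (hWc _), zero_smul]
  rw [hrhs] at key
  have key2 : ∑ m ∈ t₁, β (coordT b V m (co.ρ v)) w • b m = 0 := by
    rw [← fin_sum_eq t₁ (fun m => β (coordT b V m (co.ρ v)) w • b m)]
    exact key
  by_cases hn : n ∈ t₁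
  · exact linearIndependent_iff'.mp b.linearIndependent t₁
      (fun m => β (coordT b V m (co.ρ v)) w) key2 n hn
  · rw [coordT_not_mem_support b V n _ hn]
    exact beta_zero_left hβsmul₁ w

end Part1

section LocFin

lemma exists_findim_subcomodule (co : CoactionOn C V) (v : V) :
    ∃ U : Submodule ℂ V, FiniteDimensional ℂ U ∧ IsSubcomodule co U ∧ v ∈ U := by
  classical
  set b : Module.Basis _ ℂ C := Module.Basis.ofVectorSpace ℂ C with hb
  set t := (TensorProduct.equivFinsuppOfBasisRight b (co.ρ v)).support with ht
  set g : _ → V := fun n => coordT b V n (co.ρ v) with hg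
  set U : Submodule ℂ V := Submodule.span ℂ (g '' ↑t) with hU
  have hfd : FiniteDimensional ℂ U := FiniteDimensional.span_of_finite ℂ (t.finite_toSet.image g)
  have hgU : ∀ n ∈ t, g n ∈ U := fun n hn => Submodule.subset_span ⟨n, hn, rfl⟩
  -- v ∈ U
  have hrepr := coordT_sum_repr b V (co.ρ v)
  have hvU : v ∈ U := by
    have hcu := co.counit_id v
    rw [hrepr] at hcu
    rw [map_sum, map_sum] at hcu
    have : ∑ n ∈ t, (Coalgebra.counit (R := ℂ) (b n)) • g n = v := by
      rw [← hcu]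
      exact Finset.sum_congr rfl fun n _ => by
        rw [LinearMap.lTensor_tmul, TensorProduct.rid_tmul]
    rw [← this]
    exact Submodule.sum_mem _ fun n hn => Submodule.smul_mem _ _ (hgU n hn)
  -- key identity: ρ (g n) = ∑ m ∈ t, g m ⊗ coordT n (Δ (b m))
  have hkey : ∀ n, co.ρ (g n) =
      ∑ m ∈ t, g m ⊗ₜ[ℂ] coordT b C n (Coalgebra.comul (R := ℂ) (b m)) := by
    intro n
    have h1 : co.ρ (g n) = coordT b (V ⊗[ℂ] C) n (LinearMap.rTensor C co.ρ (co.ρ v)) :=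
      (coordT_rTensor b (V ⊗[ℂ] C) co.ρ n (co.ρ v)).symm
    rw [co.coassoc v, coordT_assoc_symm] at h1
    rw [h1]
    conv_lhs => rw [hrepr]
    rw [map_sum, map_sum]
    exact Finset.sum_congr rfl fun m _ => by
      rw [LinearMap.lTensor_tmul, LinearMap.lTensor_tmul]
  have hsub : IsSubcomodule co U := by
    intro x hx
    have : U ≤ Submodule.comap co.ρ
        (LinearMap.range (LinearMap.rTensor C U.subtype)) := by
      rw [hU]
      rw [Submodule.span_le]
      rintro _ ⟨n, hn, rfl⟩
      simp only [SetLike.mem_coe, Submodule.mem_comap]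
      rw [mem_range_rTensor_iff b]
      intro k
      rw [hkey n, map_sum]
      refine Submodule.sum_mem _ fun m hm => ?_
      rw [coordT_tmul]
      exact Submodule.smul_mem _ _ (hgU m hm)
    exact this hx
  exact ⟨U, hfd, hsub, hvU⟩

end LocFin

section Closure

lemma subcomodule_bot (co : CoactionOn C V) : IsSubcomodule co (⊥ : Submodule ℂ V) := by
  intro x hx
  rw [Submodule.mem_bot] at hx
  subst hx
  rw [map_zero]
  exact zero_mem _

lemma subcomodule_inf (co : CoactionOn C V) {W₁ W₂ : Submodule ℂ V}
    (h₁ : IsSubcomodule co W₁) (h₂ : IsSubcomodule co W₂) :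
    IsSubcomodule co (W₁ ⊓ W₂) := by
  classical
  set b : Module.Basis _ ℂ C := Module.Basis.ofVectorSpace ℂ C
  intro x hx
  rw [mem_range_rTensor_iff b]
  intro n
  exact Submodule.mem_inf.mpr
    ⟨(mem_range_rTensor_iff b W₁ _).mp (h₁ x hx.1) n,
     (mem_range_rTensor_iff b W₂ _).mp (h₂ x hx.2) n⟩

lemma subcomodule_sup (co : CoactionOn C V) {W₁ W₂ : Submodule ℂ V}
    (h₁ : IsSubcomodule co W₁) (h₂ : IsSubcomodule co W₂) :
    IsSubcomodule co (W₁ ⊔ W₂) := by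
  classical
  set b : Module.Basis _ ℂ C := Module.Basis.ofVectorSpace ℂ C
  intro x hx
  rcases Submodule.mem_sup.mp hx with ⟨y, hy, z, hz, rfl⟩
  rw [mem_range_rTensor_iff b]
  intro n
  rw [map_add, map_add]
  exact add_mem
    (Submodule.mem_sup_left ((mem_range_rTensor_iff b W₁ _).mp (h₁ y hy) n))
    (Submodule.mem_sup_right ((mem_range_rTensor_iff b W₂ _).mp (h₂ z hz) n))

lemma subcomodule_sSup_chain (co : CoactionOn C V) {c : Set (Submodule ℂ V)}
    (hch : IsChain (· ≤ ·) c) (hne : c.Nonempty)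
    (h : ∀ w ∈ c, IsSubcomodule co w) :
    IsSubcomodule co (sSup c) := by
  classical
  set b : Module.Basis _ ℂ C := Module.Basis.ofVectorSpace ℂ C
  intro x hx
  rcases (Submodule.mem_sSup_of_directed hne hch.directedOn).mp hx with ⟨w, hwc, hxw⟩
  rw [mem_range_rTensor_iff b]
  intro n
  exact le_sSup hwc ((mem_range_rTensor_iff b w _).mp (h w hwc x hxw) n)

end Closure

/-- in a unitary comodule, the orthogonal complement of a subcomodule is a
subcomodule; hence every unitary comodule is completely reducible. -/
theorem orthogonal_complement_subcomodule
    (circ : C → C)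
    (hcadd : ∀ x y : C, circ (x + y) = circ x + circ y)
    (hcsmul : ∀ (a : ℂ) (x : C), circ (a • x) = (starRingEnd ℂ) a • circ x)
    (hcinvol : ∀ x : C, circ (circ x) = x)
    (hcanti : ∀ (x : C) (ι : Type*) (r : Coalgebra.Repr ℂ x ι),
      Coalgebra.comul (R := ℂ) (circ x) =
        ∑ i ∈ r.index, circ (r.right i) ⊗ₜ[ℂ] circ (r.left i))
    (co : CoactionOn C V) (β : V → V → ℂ)
    (hβadd₁ : ∀ u u' v : V, β (u + u') v = β u v + β u' v)
    (hβsmul₁ : ∀ (a : ℂ) (u v : V), β (a • u) v = a * β u v)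
    (hβherm : ∀ u v : V, β v u = (starRingEnd ℂ) (β u v))
    (hβpos : ∀ v : V, v ≠ 0 → 0 < (β v v).re ∧ (β v v).im = 0)
    (hβunit : IsUnitaryForm circ co β) :
    (∀ W : Submodule ℂ V, IsSubcomodule co W →
      ∃ Wp : Submodule ℂ V, (∀ v : V, v ∈ Wp ↔ ∀ w ∈ W, β v w = 0) ∧
        IsSubcomodule co Wp) ∧
    (∀ W : Submodule ℂ V, IsSubcomodule co W →
      ∃ W' : Submodule ℂ V, IsSubcomodule co W' ∧ W ⊓ W' = ⊥ ∧ W ⊔ W' = ⊤) := by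
  classical
  set b : Module.Basis _ ℂ C := Module.Basis.ofVectorSpace ℂ C
  -- Part 1
  have part1 : ∀ W : Submodule ℂ V, IsSubcomodule co W →
      ∃ Wp : Submodule ℂ V, (∀ v : V, v ∈ Wp ↔ ∀ w ∈ W, β v w = 0) ∧
        IsSubcomodule co Wp := by
    intro W hW
    refine ⟨{ carrier := {v | ∀ w ∈ W, β v w = 0}
              add_mem' := fun {u} {u'} hu hu' w hw => by
                rw [hβadd₁, hu w hw, hu' w hw, add_zero]
              zero_mem' := fun w hw => beta_zero_left hβsmul₁ w
              smul_mem' := fun a u hu w hw => by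
                rw [hβsmul₁, hu w hw, mul_zero] }, fun v => Iff.rfl, ?_⟩
    intro v hv
    rw [mem_range_rTensor_iff b]
    intro n
    exact coord_orthogonal b circ co β hβsmul₁ hβunit W hW v hv n
  refine ⟨part1, ?_⟩
  intro W hW
  -- inner product structure from β
  have hβ0r : ∀ u : V, β u 0 = 0 := fun u => by
    rw [hβherm 0 u, beta_zero_left hβsmul₁ u, map_zero]
  letI core : InnerProductSpace.Core ℂ V :=
    { inner := fun x y => β y x
      conj_inner_symm := fun x y => (hβherm x y).symm
      re_inner_nonneg := fun x => by
        by_cases hx : x = 0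
        · subst hx
          show (0:ℝ) ≤ RCLike.re (β (0:V) (0:V))
          rw [beta_zero_left hβsmul₁ (0:V)]
          simp
        · exact le_of_lt (hβpos x hx).1
      add_left := fun x y z => by
        show β z (x + y) = β z x + β z y
        rw [hβherm (x + y) z, hβadd₁, map_add, ← hβherm x z, ← hβherm y z]
      smul_left := fun x y r => by
        show β y (r • x) = (starRingEnd ℂ) r * β y x
        rw [hβherm (r • x) y, hβsmul₁, map_mul, ← hβherm x y]
      definite := fun x hx => by
        by_contra hne
        have h := (hβpos x hne).1
        rw [show β x x = 0 from hx] at h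
        simp at h }
  letI : NormedAddCommGroup V := @InnerProductSpace.Core.toNormedAddCommGroup ℂ V _ _ _ core
  letI : InnerProductSpace ℂ V := InnerProductSpace.ofCore core.toCore
  have hinner : ∀ u v : V, (inner ℂ u v : ℂ) = β v u := fun _ _ => rfl
  -- Zorn's lemma
  set S : Set (Submodule ℂ V) := {W' | IsSubcomodule co W' ∧ W ⊓ W' = ⊥} with hS
  have hbotS : (⊥ : Submodule ℂ V) ∈ S := ⟨subcomodule_bot co, inf_bot_eq W⟩
  obtain ⟨W', -, hmax⟩ := zorn_le_nonempty₀ S (fun c hcS hchain y hy => by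
    refine ⟨sSup c, ⟨subcomodule_sSup_chain co hchain ⟨y, hy⟩ (fun w hw => (hcS hw).1), ?_⟩,
      fun z hz => le_sSup hz⟩
    rw [eq_bot_iff]
    intro x hx
    rcases (Submodule.mem_sSup_of_directed ⟨y, hy⟩ hchain.directedOn).mp hx.2 with ⟨w, hwc, hxw⟩
    have : x ∈ W ⊓ w := ⟨hx.1, hxw⟩
    rw [(hcS hwc).2] at this
    exact this) ⊥ hbotS
  refine ⟨W', hmax.1.1, hmax.1.2, ?_⟩
  by_contra hne
  set Mo : Submodule ℂ V := W ⊔ W' with hMo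
  have hMosub : IsSubcomodule co Mo := subcomodule_sup co hW hmax.1.1
  have hvex : ∃ v : V, v ∉ Mo := by
    by_contra h
    push_neg at h
    exact hne (Submodule.eq_top_iff'.mpr h)
  obtain ⟨v, hv⟩ := hvex
  obtain ⟨U, hUfd, hUsub, hvU⟩ := exists_findim_subcomodule co v
  set K : Submodule ℂ V := U ⊓ Mo with hK
  have hKsub : IsSubcomodule co K := subcomodule_inf co hUsub hMosub
  haveI : FiniteDimensional ℂ U := hUfd
  haveI : FiniteDimensional ℂ K := Submodule.finiteDimensional_of_le inf_le_left
  haveI : CompleteSpace K := FiniteDimensional.complete ℂ K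
  have hsupK : K ⊔ Kᗮ = ⊤ := Submodule.sup_orthogonal_of_hasOrthogonalProjection
  obtain ⟨Kp, hKpmem, hKpsub⟩ := part1 K hKsub
  have hKeq : Kp = Kᗮ := by
    ext x
    rw [hKpmem, Submodule.mem_orthogonal]
    exact forall_congr' fun u => forall_congr' fun hu => by rw [hinner]
  have hKopsub : IsSubcomodule co Kᗮ := hKeq ▸ hKpsub
  have hvtop : v ∈ K ⊔ Kᗮ := hsupK ▸ Submodule.mem_top
  obtain ⟨k, hk, p, hp, hkp⟩ := Submodule.mem_sup.mp hvtop
  have hpU : p ∈ U := by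
    have hkU : k ∈ U := (inf_le_left : K ≤ U) hk
    have : p = v - k := by rw [← hkp]; abel
    rw [this]
    exact sub_mem hvU hkU
  set P : Submodule ℂ V := U ⊓ Kᗮ with hP
  have hPsub : IsSubcomodule co P := subcomodule_inf co hUsub hKopsub
  have hpP : p ∈ P := ⟨hpU, hp⟩
  have hpMo : p ∉ Mo := fun h => hv (by
    rw [← hkp]
    exact add_mem ((inf_le_right : K ≤ Mo) hk) h)
  have hS' : (W' ⊔ P) ∈ S := by
    refine ⟨subcomodule_sup co hmax.1.1 hPsub, ?_⟩
    rw [eq_bot_iff]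
    rintro x ⟨hxW, hxWP⟩
    rcases Submodule.mem_sup.mp hxWP with ⟨y, hy, q, hq, hyq⟩
    have hqMo : q ∈ Mo := by
      have hxMo : x ∈ Mo := (le_sup_left : W ≤ Mo) hxW
      have hyMo : y ∈ Mo := (le_sup_right : W' ≤ Mo) hy
      have : q = x - y := by rw [← hyq]; abel
      rw [this]
      exact sub_mem hxMo hyMo
    have hqK : q ∈ K := ⟨hq.1, hqMo⟩
    have hq0 : q = 0 := by
      have hiq : (inner ℂ q q : ℂ) = 0 :=
        Submodule.inner_right_of_mem_orthogonal hqK hq.2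
      rw [hinner] at hiq
      by_contra hqne
      have := (hβpos q hqne).1
      rw [hiq] at this
      simp at this
    rw [hq0, add_zero] at hyq
    subst hyq
    have : y ∈ W ⊓ W' := ⟨hxW, hy⟩
    rw [hmax.1.2] at this
    exact this
  have hle : (W' ⊔ P) ≤ W' := hmax.2 hS' le_sup_left
  exact hpMo ((le_sup_right.trans (hle.trans le_sup_right)) hpP)
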